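/- For every ρ, μ ∈ ℝ and σ > 0, the expected improvement under a Gaussian is strictly positive: if Y is distributed according to N(μ, σ²), then E[max(0, ρ − Y)] > 0; equivalently, (ρ − μ)·Φ((ρ − μ)/σ) + σ·φ((ρ − μ)/σ) > 0. -/

import Mathlib

open MeasureTheory ProbabilityTheory

/-- The standard normal probability density function. -/
noncomputable def stdNormalPDF (z : ℝ) : ℝ := Real.exp (-z ^ 2 / 2) / Real.sqrt (2 * Real.pi)

/-- The standard normal cumulative distribution function. -/
noncomputable def stdNormalCDF (z : ℝ) : ℝ := ∫ t in Set.Iic z, stdNormalPDF t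

open Real Set Filter

lemma stdNormalPDF_pos (z : ℝ) : 0 < stdNormalPDF z :=
  div_pos (exp_pos _) (Real.sqrt_pos.mpr (by positivity))

lemma integrable_stdNormalPDF : Integrable stdNormalPDF := by
  have h := (integrable_exp_neg_mul_sq (show (0:ℝ) < 1/2 by norm_num)).div_const (Real.sqrt (2*π))
  refine h.congr (Filter.Eventually.of_forall fun x => ?_)
  rw [stdNormalPDF]
  ring_nf

lemma integrable_mul_stdNormalPDF : Integrable (fun t : ℝ => t * stdNormalPDF t) := by
  have h := (integrable_mul_exp_neg_mul_sq (show (0:ℝ) < 1/2 by norm_num)).div_const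
    (Real.sqrt (2*π))
  refine h.congr (Filter.Eventually.of_forall fun x => ?_)
  simp only [stdNormalPDF]
  ring_nf

lemma hasDerivAt_stdNormalPDF (x : ℝ) :
    HasDerivAt stdNormalPDF (-x * stdNormalPDF x) x := by
  have h1 : HasDerivAt (fun t : ℝ => -t ^ 2 / 2) (-x) x := by
    have h := ((hasDerivAt_pow 2 x).neg).div_const 2
    have hv : -(((2:ℕ):ℝ) * x ^ (2-1)) / 2 = -x := by push_cast; ring
    rw [hv] at h
    exact h
  have h2 := (h1.exp).div_const (Real.sqrt (2 * π))
  have heq : rexp (-x ^ 2 / 2) * -x / Real.sqrt (2 * π) = -x * stdNormalPDF x := by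
    rw [stdNormalPDF]; ring
  rw [← heq]
  exact h2

lemma tendsto_stdNormalPDF_atBot : Tendsto stdNormalPDF atBot (nhds 0) := by
  have h1 : Tendsto (fun t : ℝ => t^2) atBot atTop := by
    have ha : Tendsto (fun x : ℝ => x ^ 2) atTop atTop := tendsto_pow_atTop two_ne_zero
    have hb : Tendsto (fun t : ℝ => -t) atBot atTop := tendsto_neg_atBot_atTop
    have := ha.comp hb
    simpa [Function.comp_def] using this
  have h2 : Tendsto (fun t : ℝ => -t^2/2) atBot atBot :=
    (tendsto_neg_atTop_atBot.comp h1).atBot_div_const (by norm_num)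
  have h3 := (Real.tendsto_exp_atBot.comp h2).div_const (Real.sqrt (2*π))
  have h4 : Tendsto (fun a : ℝ => rexp (-a ^ 2 / 2) / √(2 * π)) atBot (nhds 0) := by
    simpa only [Function.comp_def, zero_div] using h3
  exact h4

lemma integral_neg_mul_stdNormalPDF (z : ℝ) :
    ∫ t in Iic z, -t * stdNormalPDF t = stdNormalPDF z := by
  have h := integral_Iic_of_hasDerivAt_of_tendsto' (a := z) (m := 0)
    (fun x _ => hasDerivAt_stdNormalPDF x)
    (by
      exact (integrable_mul_stdNormalPDF.neg.congr
        (Filter.Eventually.of_forall fun t => (neg_mul t (stdNormalPDF t)).symm)).integrableOn)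
    tendsto_stdNormalPDF_atBot
  simpa using h

lemma key_pos (z : ℝ) : 0 < z * stdNormalCDF z + stdNormalPDF z := by
  have hInt1 : IntegrableOn stdNormalPDF (Iic z) := integrable_stdNormalPDF.integrableOn
  have hInt2 : IntegrableOn (fun t => t * stdNormalPDF t) (Iic z) :=
    integrable_mul_stdNormalPDF.integrableOn
  have hEq : EqOn (fun t => z * stdNormalPDF t + -t * stdNormalPDF t)
      (fun t => max 0 (z - t) * stdNormalPDF t) (Iic z) := by
    intro t ht
    simp only
    rw [max_eq_right (sub_nonneg.mpr ht)]
    ring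
  have hIntSum : IntegrableOn (fun t => z * stdNormalPDF t + -t * stdNormalPDF t) (Iic z) := by
    exact (hInt1.const_mul z).add (hInt2.neg.congr
      (Filter.Eventually.of_forall fun t => (neg_mul t (stdNormalPDF t)).symm))
  have hg : IntegrableOn (fun t => max 0 (z - t) * stdNormalPDF t) (Iic z) :=
    hIntSum.congr_fun hEq measurableSet_Iic
  have hpos : 0 < ∫ t in Iic z, max 0 (z - t) * stdNormalPDF t := by
    refine (integral_pos_iff_support_of_nonneg (fun t => ?_) hg).mpr ?_
    · exact mul_nonneg (le_max_left _ _) (stdNormalPDF_pos t).le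
    · have hsub : Iio z ⊆ Function.support fun t => max 0 (z - t) * stdNormalPDF t := by
        intro t ht
        have h1 : 0 < z - t := sub_pos.mpr ht
        simp only [Function.mem_support]
        rw [max_eq_right h1.le]
        exact (mul_pos h1 (stdNormalPDF_pos t)).ne'
      calc (0 : ENNReal) < volume.restrict (Iic z) (Iio z) := by
            rw [Measure.restrict_apply measurableSet_Iio, Set.inter_eq_self_of_subset_left
              Iio_subset_Iic_self, Real.volume_Iio]
            exact ENNReal.zero_lt_top
        _ ≤ _ := measure_mono hsub
  have heq2 : ∫ t in Iic z, max 0 (z - t) * stdNormalPDF t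
      = z * stdNormalCDF z + stdNormalPDF z := by
    rw [← setIntegral_congr_fun measurableSet_Iic hEq,
      integral_add (hInt1.const_mul z) (hInt2.neg.congr
        (Filter.Eventually.of_forall fun t => (neg_mul t (stdNormalPDF t)).symm)),
      integral_const_mul, integral_neg_mul_stdNormalPDF, stdNormalCDF]
  exact heq2 ▸ hpos

lemma integrable_improvement_gaussian (ρ μ : ℝ) {v : NNReal} (hv : v ≠ 0) :
    Integrable (fun y => max 0 (ρ - y)) (gaussianReal μ v) := by
  have hvpos : (0 : ℝ) < (v : ℝ) := by
    exact_mod_cast hv.bot_lt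
  set b : ℝ := (2 * (v : ℝ))⁻¹ with hb_def
  have hb : 0 < b := by positivity
  set c : ℝ := (Real.sqrt (2 * π * v))⁻¹ with hc_def
  have hc : 0 ≤ c := by positivity
  have pdf_eq : ∀ x, gaussianPDFReal μ v x = c * rexp (-b * (x - μ) ^ 2) := by
    intro x
    rw [gaussianPDFReal]
    congr 1
    rw [hb_def]
    field_simp
  -- integrability of the bounding function
  have hA : Integrable (fun t : ℝ => rexp (-b * t ^ 2)) := integrable_exp_neg_mul_sq hb
  have hB : Integrable (fun t : ℝ => |t| * rexp (-b * t ^ 2)) := by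
    have h := (integrable_mul_exp_neg_mul_sq hb).abs
    refine h.congr (Filter.Eventually.of_forall fun t => ?_)
    simp only [abs_mul, abs_of_nonneg (Real.exp_pos _).le]
  have hg0 : Integrable (fun t : ℝ => (|ρ| + |t + μ|) * (c * rexp (-b * t ^ 2))) := by
    refine Integrable.mono'
      (g := fun t => (|ρ| + |μ|) * (c * rexp (-b * t ^ 2)) + c * (|t| * rexp (-b * t ^ 2)))
      (((hA.const_mul c).const_mul (|ρ| + |μ|)).add (hB.const_mul c)) ?_ ?_
    · exact Continuous.aestronglyMeasurable (by fun_prop)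
    · refine Filter.Eventually.of_forall fun t => ?_
      have h1 : 0 ≤ (|ρ| + |t + μ|) * (c * rexp (-b * t ^ 2)) := by positivity
      rw [Real.norm_of_nonneg h1]
      have h2 : |t + μ| ≤ |t| + |μ| := abs_add_le t μ
      have h3 : 0 ≤ c * rexp (-b * t ^ 2) := by positivity
      show _ ≤ (|ρ| + |μ|) * (c * rexp (-b * t ^ 2)) + c * (|t| * rexp (-b * t ^ 2))
      nlinarith [mul_nonneg (sub_nonneg.mpr h2) h3]
  have hg : Integrable (fun x : ℝ => (|ρ| + |x|) * (c * rexp (-b * (x - μ) ^ 2))) := by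
    have := hg0.comp_sub_right μ
    refine this.congr (Filter.Eventually.of_forall fun x => ?_)
    simp [sub_add_cancel]
  rw [gaussianReal_of_var_ne_zero μ hv,
    integrable_withDensity_iff (measurable_gaussianPDF μ v)
      (Filter.Eventually.of_forall fun x => ENNReal.ofReal_lt_top)]
  have htr : ∀ x, (gaussianPDF μ v x).toReal = c * rexp (-b * (x - μ) ^ 2) := by
    intro x
    rw [gaussianPDF, ENNReal.toReal_ofReal (gaussianPDFReal_nonneg μ v x), pdf_eq]
  refine hg.mono' ?_ (Filter.Eventually.of_forall fun x => ?_)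
  · simp only [htr]
    exact Continuous.aestronglyMeasurable (by fun_prop)
  · rw [htr]
    have h1 : 0 ≤ max 0 (ρ - x) * (c * rexp (-b * (x - μ) ^ 2)) := by positivity
    rw [Real.norm_of_nonneg h1]
    refine mul_le_mul_of_nonneg_right ?_ (by positivity)
    refine max_le (by positivity) ?_
    calc ρ - x ≤ |ρ - x| := le_abs_self _
      _ ≤ |ρ| + |x| := abs_sub _ _

/-- For every ρ, μ ∈ ℝ and σ > 0, the expected improvement under a Gaussian is strictly
positive: if `Y ~ N(μ, σ²)` then `E[max 0 (ρ - Y)] > 0`; equivalently,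
`(ρ - μ)·Φ((ρ - μ)/σ) + σ·φ((ρ - μ)/σ) > 0`. -/
theorem expected_improvement_pos (ρ μ σ : ℝ) (hσ : 0 < σ) :
    (0 < ∫ y, max 0 (ρ - y) ∂(gaussianReal μ (Real.toNNReal (σ ^ 2)))) ∧
      0 < (ρ - μ) * stdNormalCDF ((ρ - μ) / σ) + σ * stdNormalPDF ((ρ - μ) / σ) := by
  constructor
  · have hv : Real.toNNReal (σ ^ 2) ≠ 0 :=
      (Real.toNNReal_pos.mpr (by positivity)).ne'
    have hInt := integrable_improvement_gaussian ρ μ hv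
    refine (integral_pos_iff_support_of_nonneg (fun y => le_max_left _ _) hInt).mpr ?_
    have hsupp : Iio ρ ⊆ Function.support fun y => max 0 (ρ - y) := by
      intro y hy
      have h1 : 0 < ρ - y := sub_pos.mpr hy
      simp only [Function.mem_support]
      rw [max_eq_right h1.le]
      exact h1.ne'
    have hne : gaussianReal μ (Real.toNNReal (σ ^ 2)) (Iio ρ) ≠ 0 := by
      intro h0
      have := gaussianReal_absolutelyContinuous' μ hv h0
      rw [Real.volume_Iio] at this
      exact ENNReal.top_ne_zero this
    calc (0 : ENNReal) < gaussianReal μ (Real.toNNReal (σ ^ 2)) (Iio ρ) :=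
          hne.bot_lt
      _ ≤ _ := measure_mono hsupp
  · have hw : ρ - μ = σ * ((ρ - μ) / σ) := by
      field_simp
    rw [show (ρ - μ) * stdNormalCDF ((ρ - μ) / σ) + σ * stdNormalPDF ((ρ - μ) / σ)
        = σ * (((ρ - μ) / σ) * stdNormalCDF ((ρ - μ) / σ) + stdNormalPDF ((ρ - μ) / σ)) by
      nth_rewrite 1 [hw]; ring]
    exact mul_pos hσ (key_pos _)
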